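/- There exist binary joint distributions p_{X,Y} and p_{X,Z} with equal Y- and Z-marginals (p_Y = p_Z) such that P_{X|Y} > P_{X|Z} but I(X:Y) < I(X:Z). Concretely, p_{X,Y} = [[0.48, 0.11],[0.11, 0.30]] and p_{X,Z} = [[0.21, 0.38],[0.38, 0.03]] satisfy p_Y = p_Z = (0.59, 0.41), P_{X|Y} = 0.78 > 0.76 = P_{X|Z}, and I(X:Y) < 0.23 < 0.26 < I(X:Z) (logarithms base 2). -/

import Mathlib

noncomputable section

/-- Guessing probability `Σ_y max_x q x y` of a 2×2 joint distribution. -/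
def Pguess (q : Fin 2 → Fin 2 → ℝ) : ℝ :=
  max (q 0 0) (q 1 0) + max (q 0 1) (q 1 1)

/-- Mutual information (base 2) of a 2×2 joint distribution. -/
def I2 (q : Fin 2 → Fin 2 → ℝ) : ℝ :=
  ∑ x : Fin 2, ∑ y : Fin 2,
    q x y * Real.logb 2 (q x y / ((q x 0 + q x 1) * (q 0 y + q 1 y)))

lemma logb_combo_lt (m1 m2 m3 M : ℕ) (a b c : ℝ) (ha : 0 < a) (hb : 0 < b) (hc : 0 < c)
    (h : a ^ m1 * b ^ m2 * c ^ m3 < 2 ^ M) :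
    (m1 : ℝ) * Real.logb 2 a + m2 * Real.logb 2 b + m3 * Real.logb 2 c < M := by
  have h2 : (0:ℝ) < Real.log 2 := Real.log_pos (by norm_num)
  have hp : (0:ℝ) < a ^ m1 * b ^ m2 * c ^ m3 := by positivity
  have hl := Real.log_lt_log hp h
  rw [Real.log_mul (by positivity) (by positivity), Real.log_mul (by positivity) (by positivity),
      Real.log_pow, Real.log_pow, Real.log_pow, Real.log_pow] at hl
  rw [Real.logb, Real.logb, Real.logb, mul_div_assoc', mul_div_assoc', mul_div_assoc',
      ← add_div, ← add_div, div_lt_iff₀ h2]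
  push_cast at hl ⊢
  linarith

lemma logb_combo_gt (m1 m2 m3 M : ℕ) (a b c : ℝ) (ha : 0 < a) (hb : 0 < b) (hc : 0 < c)
    (h : (2:ℝ) ^ M < a ^ m1 * b ^ m2 * c ^ m3) :
    (M : ℝ) < m1 * Real.logb 2 a + m2 * Real.logb 2 b + m3 * Real.logb 2 c := by
  have h2 : (0:ℝ) < Real.log 2 := Real.log_pos (by norm_num)
  have hl := Real.log_lt_log (by positivity) h
  rw [Real.log_mul (by positivity) (by positivity), Real.log_mul (by positivity) (by positivity),
      Real.log_pow, Real.log_pow, Real.log_pow, Real.log_pow] at hl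
  rw [Real.logb, Real.logb, Real.logb, mul_div_assoc', mul_div_assoc', mul_div_assoc',
      ← add_div, ← add_div, lt_div_iff₀ h2]
  push_cast at hl ⊢
  linarith

theorem counterexample_monotonicity :
    ∃ qY qZ : Fin 2 → Fin 2 → ℝ,
      qY = ![![0.48, 0.11], ![0.11, 0.30]] ∧
      qZ = ![![0.21, 0.38], ![0.38, 0.03]] ∧
      (qY 0 0 + qY 1 0 = qZ 0 0 + qZ 1 0) ∧
      (qY 0 1 + qY 1 1 = qZ 0 1 + qZ 1 1) ∧
      Pguess qY = 0.78 ∧ Pguess qZ = 0.76 ∧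
      Pguess qZ < Pguess qY ∧
      I2 qY < 0.23 ∧ (0.26 : ℝ) < I2 qZ ∧
      I2 qY < I2 qZ := by
  have bY : I2 ![![0.48, 0.11], ![0.11, 0.30]] < 0.23 := by
    have hY : I2 ![![0.48, 0.11], ![0.11, 0.30]]
        = (0.48 * Real.logb 2 (4800/3481) + 0.22 * Real.logb 2 (1100/2419)
          + 0.30 * Real.logb 2 (3000/1681)) := by
      simp only [I2, Fin.sum_univ_two]
      norm_num
      ring
    rw [hY]
    have := logb_combo_lt 48 22 30 23 (4800/3481) (1100/2419) (3000/1681)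
      (by norm_num) (by norm_num) (by norm_num) (by norm_num)
    push_cast at this
    linarith
  have bZ : (0.26:ℝ) < I2 ![![0.21, 0.38], ![0.38, 0.03]] := by
    have hZ : I2 ![![0.21, 0.38], ![0.38, 0.03]]
        = (0.21 * Real.logb 2 (2100/3481) + 0.76 * Real.logb 2 (3800/2419)
          + 0.03 * Real.logb 2 (300/1681)) := by
      simp only [I2, Fin.sum_univ_two]
      norm_num
      ring
    rw [hZ]
    have := logb_combo_gt 21 76 3 26 (2100/3481) (3800/2419) (300/1681)
      (by norm_num) (by norm_num) (by norm_num) (by norm_num)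
    push_cast at this
    linarith
  exact ⟨_, _, rfl, rfl, by norm_num, by norm_num, by norm_num [Pguess],
    by norm_num [Pguess], by norm_num [Pguess], bY, bZ, by linarith⟩
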